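/- For every positive integer n, the Boolean lattice of all subsets of {1,...,n} can be partitioned into exactly C(n, floor(n/2)) chains, each of which is symmetric: a chain containing sets of every size from k to n-k for some k ≤ n/2, with exactly one set of each such size. -/
import Mathlib

open Finset

lemma scd_chain_sup_mem {α : Type*} [DecidableEq α] {C : Finset (Finset α)}
    (hC : IsChain (· ⊆ ·) (C : Set (Finset α))) (hne : C.Nonempty) : C.sup id ∈ C := by
  have := Finset.sup'_mem (↑C : Set (Finset α)) ?_ C hne id (fun b hb => hb)
  · rwa [Finset.sup'_eq_sup] at this
  · intro x hx y hy
    rcases eq_or_ne x y with rfl | hxy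
    · simpa using hx
    · rcases hC hx hy hxy with h | h
      · simpa [sup_eq_union, union_eq_right.mpr h] using hy
      · simpa [sup_eq_union, union_eq_left.mpr h] using hx

lemma scd_chain_card_inj {α : Type*} [DecidableEq α] {C : Finset (Finset α)}
    (hC : IsChain (· ⊆ ·) (C : Set (Finset α))) {X Y : Finset α} (hX : X ∈ C) (hY : Y ∈ C)
    (h : X.card = Y.card) : X = Y := by
  rcases eq_or_ne X Y with rfl | hne
  · rfl
  · rcases hC hX hY hne with hs | hs
    · exact eq_of_subset_of_card_le hs h.ge
    · exact (eq_of_subset_of_card_le hs h.le).symm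

lemma scd_aux {α : Type*} [DecidableEq α] (S : Finset α) :
    ∃ 𝒞 : Finset (Finset (Finset α)),
      (∀ A ⊆ S, ∃! C, C ∈ 𝒞 ∧ A ∈ C) ∧
      ∀ C ∈ 𝒞, (∀ X ∈ C, X ⊆ S) ∧ IsChain (· ⊆ ·) (C : Set (Finset α)) ∧
        ∃ k, k ≤ S.card / 2 ∧ C.image Finset.card = Finset.Icc k (S.card - k) := by
  induction S using Finset.induction_on with
  | empty =>
      refine ⟨{{∅}}, ?_, ?_⟩
      · intro A hA
        rw [Finset.subset_empty] at hA
        subst hA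
        refine ⟨{∅}, by simp, ?_⟩
        intro C hC
        simp only [Finset.mem_singleton] at hC
        exact hC.1
      · intro C hC
        simp only [Finset.mem_singleton] at hC
        subst hC
        refine ⟨by simp, by rw [Finset.coe_singleton]; exact Set.subsingleton_singleton.isChain, 0, by simp, by simp⟩
  | @insert a S ha ih =>
      obtain ⟨𝒞, hpart, hprop⟩ := ih
      set N := S.card with hN
      -- facts about each chain
      have facts : ∀ C ∈ 𝒞, ∀ k, k ≤ N / 2 → C.image Finset.card = Finset.Icc k (N - k) →
          C.Nonempty ∧ C.sup id ∈ C ∧ (C.sup id).card = N - k ∧ C.sup id ⊆ S ∧ a ∉ C.sup id := by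
        intro C hC k hk himg
        have hkN : k ≤ N - k := by omega
        have hne : C.Nonempty := by
          have : (C.image Finset.card).Nonempty := by
            rw [himg]; exact Finset.nonempty_Icc.mpr hkN
          rwa [Finset.image_nonempty] at this
        have hchain := (hprop C hC).2.1
        have hsub := (hprop C hC).1
        have hM : C.sup id ∈ C := scd_chain_sup_mem hchain hne
        have hMS : C.sup id ⊆ S := hsub _ hM
        have hMcard : (C.sup id).card = N - k := by
          have h1 : (C.sup id).card ∈ Finset.Icc k (N - k) := by
            rw [← himg]; exact Finset.mem_image_of_mem _ hM
          obtain ⟨X, hX, hXc⟩ : ∃ X ∈ C, X.card = N - k := by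
            have : N - k ∈ C.image Finset.card := by
              rw [himg]; exact Finset.mem_Icc.mpr ⟨hkN, le_refl _⟩
            simpa using this
          have hXM : X ⊆ C.sup id := Finset.le_sup (f := id) hX
          have := Finset.card_le_card hXM
          rw [hXc] at this
          exact le_antisymm (Finset.mem_Icc.mp h1).2 this
        exact ⟨hne, hM, hMcard, hMS, fun h => ha (hMS h)⟩
      classical
      refine ⟨𝒞.image (fun C => insert (insert a (C.sup id)) C) ∪
        (𝒞.filter (fun C => (C.erase (C.sup id)).Nonempty)).image
          (fun C => (C.erase (C.sup id)).image (insert a)), ?_, ?_⟩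
      · -- partition
        intro A hA
        by_cases haA : a ∈ A
        · -- A contains a
          have hB : A.erase a ⊆ S := by
            intro x hx
            have := hA (Finset.mem_erase.mp hx).2
            rcases Finset.mem_insert.mp this with h | h
            · exact absurd h (Finset.mem_erase.mp hx).1
            · exact h
          obtain ⟨C, ⟨hC, hBC⟩, huniq⟩ := hpart _ hB
          have hAeq : A = insert a (A.erase a) := (Finset.insert_erase haA).symm
          have haB : a ∉ A.erase a := Finset.notMem_erase a A
          obtain ⟨-, -, k, hk, himg⟩ := hprop C hC
          obtain ⟨hne, hM, hMcard, hMS, haM⟩ := facts C hC k hk himg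
          by_cases hBM : A.erase a = C.sup id
          · -- A = insert a (max of C): use f₁ C
            refine ⟨insert (insert a (C.sup id)) C, ⟨Finset.mem_union_left _
              (Finset.mem_image_of_mem _ hC), by rw [hBM] at hAeq; rw [hAeq]; exact Finset.mem_insert_self _ _⟩, ?_⟩
            rintro D ⟨hD, hAD⟩
            rcases Finset.mem_union.mp hD with hD | hD
            · obtain ⟨C', hC', rfl⟩ := Finset.mem_image.mp hD
              obtain ⟨-, -, k', hk', himg'⟩ := hprop C' hC'
              obtain ⟨hne', hM', hMcard', hMS', haM'⟩ := facts C' hC' k' hk' himg'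
              rcases Finset.mem_insert.mp hAD with h | h
              · have : A.erase a = C'.sup id := by rw [h, Finset.erase_insert haM']
                have hC'C : C' = C := huniq C' ⟨hC', this ▸ hM'⟩
                rw [hC'C]
              · exact absurd ((hprop C' hC').1 _ h haA) ha
            · obtain ⟨C', hC'f, rfl⟩ := Finset.mem_image.mp hD
              have hC' := (Finset.mem_filter.mp hC'f).1
              obtain ⟨B', hB', hAB⟩ := Finset.mem_image.mp hAD
              have haB' : a ∉ B' := fun h => ha ((hprop C' hC').1 _ (Finset.mem_of_mem_erase hB') h)
              have hBB' : A.erase a = B' := by rw [← hAB, Finset.erase_insert haB']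
              have hC'C : C' = C := huniq C' ⟨hC', hBB' ▸ Finset.mem_of_mem_erase hB'⟩
              exfalso
              exact (Finset.mem_erase.mp hB').1 (by rw [← hBB', hBM, hC'C])
          · -- use f₂ C
            have hBe : A.erase a ∈ C.erase (C.sup id) := Finset.mem_erase.mpr ⟨hBM, hBC⟩
            refine ⟨(C.erase (C.sup id)).image (insert a), ⟨Finset.mem_union_right _
              (Finset.mem_image_of_mem _ (Finset.mem_filter.mpr ⟨hC, ⟨_, hBe⟩⟩)), ?_⟩, ?_⟩
            · rw [hAeq]; exact Finset.mem_image_of_mem _ hBe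
            rintro D ⟨hD, hAD⟩
            rcases Finset.mem_union.mp hD with hD | hD
            · obtain ⟨C', hC', rfl⟩ := Finset.mem_image.mp hD
              obtain ⟨-, -, k', hk', himg'⟩ := hprop C' hC'
              obtain ⟨hne', hM', hMcard', hMS', haM'⟩ := facts C' hC' k' hk' himg'
              rcases Finset.mem_insert.mp hAD with h | h
              · have hBsup : A.erase a = C'.sup id := by rw [h, Finset.erase_insert haM']
                have hC'C : C' = C := huniq C' ⟨hC', hBsup ▸ hM'⟩
                exact absurd (hC'C ▸ hBsup) hBM
              · exact absurd ((hprop C' hC').1 _ h haA) ha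
            · obtain ⟨C', hC'f, rfl⟩ := Finset.mem_image.mp hD
              have hC' := (Finset.mem_filter.mp hC'f).1
              obtain ⟨B', hB', hAB⟩ := Finset.mem_image.mp hAD
              have haB' : a ∉ B' := fun h => ha ((hprop C' hC').1 _ (Finset.mem_of_mem_erase hB') h)
              have hBB' : A.erase a = B' := by rw [← hAB, Finset.erase_insert haB']
              have hC'C : C' = C := huniq C' ⟨hC', hBB' ▸ Finset.mem_of_mem_erase hB'⟩
              rw [hC'C]
        · -- a ∉ A
          have hAS : A ⊆ S := fun x hx => by
            rcases Finset.mem_insert.mp (hA hx) with h | h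
            · exact absurd (h ▸ hx) haA
            · exact h
          obtain ⟨C, ⟨hC, hAC⟩, huniq⟩ := hpart A hAS
          refine ⟨insert (insert a (C.sup id)) C, ⟨Finset.mem_union_left _
            (Finset.mem_image_of_mem _ hC), Finset.mem_insert_of_mem hAC⟩, ?_⟩
          rintro D ⟨hD, hAD⟩
          rcases Finset.mem_union.mp hD with hD | hD
          · obtain ⟨C', hC', rfl⟩ := Finset.mem_image.mp hD
            rcases Finset.mem_insert.mp hAD with h | h
            · exact absurd (h ▸ Finset.mem_insert_self a _) haA
            · rw [huniq C' ⟨hC', h⟩]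
          · obtain ⟨C', hC'f, rfl⟩ := Finset.mem_image.mp hD
            obtain ⟨B', hB', hAB⟩ := Finset.mem_image.mp hAD
            exact absurd (hAB ▸ Finset.mem_insert_self a B') haA
      · -- properties of chains
        intro D hD
        rcases Finset.mem_union.mp hD with hD | hD
        · obtain ⟨C, hC, rfl⟩ := Finset.mem_image.mp hD
          obtain ⟨hsub, hchain, k, hk, himg⟩ := hprop C hC
          obtain ⟨hne, hM, hMcard, hMS, haM⟩ := facts C hC k hk himg
          have hkN : k ≤ N := le_trans hk (Nat.div_le_self _ _)
          refine ⟨?_, ?_, k, ?_, ?_⟩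
          · intro X hX
            rcases Finset.mem_insert.mp hX with h | h
            · rw [h]; exact Finset.insert_subset_insert a hMS
            · exact (hsub X h).trans (Finset.subset_insert a S)
          · rw [Finset.coe_insert]
            refine hchain.insert ?_
            intro B hB _
            right
            exact (Finset.le_sup (f := id) hB).trans (Finset.subset_insert _ _)
          · rw [Finset.card_insert_of_notMem ha]
            omega
          · rw [Finset.image_insert, himg, Finset.card_insert_of_notMem haM, hMcard,
              Finset.card_insert_of_notMem ha]
            ext m
            simp only [Finset.mem_insert, Finset.mem_Icc]
            omega
        · obtain ⟨C, hCf, rfl⟩ := Finset.mem_image.mp hD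
          obtain ⟨hC, hne2⟩ := Finset.mem_filter.mp hCf
          obtain ⟨hsub, hchain, k, hk, himg⟩ := hprop C hC
          obtain ⟨hne, hM, hMcard, hMS, haM⟩ := facts C hC k hk himg
          have hkN : k ≤ N := le_trans hk (Nat.div_le_self _ _)
          -- the erase is nonempty so k < N - k
          have hklt : k < N - k := by
            obtain ⟨B, hB⟩ := hne2
            have hBC := Finset.mem_of_mem_erase hB
            have hBne := (Finset.mem_erase.mp hB).1
            have hBcard : B.card ∈ Finset.Icc k (N - k) := by
              rw [← himg]; exact Finset.mem_image_of_mem _ hBC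
            have hne3 : B.card ≠ N - k := fun h => hBne (scd_chain_card_inj hchain hBC hM (by rw [h, hMcard]))
            have hI := Finset.mem_Icc.mp hBcard
            omega
          have haC : ∀ B ∈ C, a ∉ B := fun B hB h => ha (hsub B hB h)
          refine ⟨?_, ?_, k + 1, ?_, ?_⟩
          · intro X hX
            obtain ⟨B, hB, rfl⟩ := Finset.mem_image.mp hX
            exact Finset.insert_subset_insert a (hsub _ (Finset.mem_of_mem_erase hB))
          · intro X hX Y hY hXY
            simp only [Finset.coe_image, Set.mem_image, Finset.mem_coe] at hX hY
            obtain ⟨B₁, hB₁, rfl⟩ := hX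
            obtain ⟨B₂, hB₂, rfl⟩ := hY
            have hB12 : B₁ ≠ B₂ := fun h => hXY (by rw [h])
            rcases hchain (Finset.mem_of_mem_erase hB₁) (Finset.mem_of_mem_erase hB₂) hB12 with h | h
            · exact Or.inl (Finset.insert_subset_insert a h)
            · exact Or.inr (Finset.insert_subset_insert a h)
          · rw [Finset.card_insert_of_notMem ha]
            omega
          · rw [Finset.card_insert_of_notMem ha, Finset.image_image]
            ext m
            simp only [Finset.mem_image, Finset.mem_Icc, Function.comp_apply]
            constructor
            · rintro ⟨B, hB, rfl⟩
              have hBC := Finset.mem_of_mem_erase hB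
              have haB : a ∉ B := haC B hBC
              have hBm : B.card ∈ Finset.Icc k (N - k) := by
                rw [← himg]; exact Finset.mem_image_of_mem _ hBC
              have hBne : B.card ≠ N - k := fun h =>
                (Finset.mem_erase.mp hB).1 (scd_chain_card_inj hchain hBC hM (by rw [h, hMcard]))
              have hBI := Finset.mem_Icc.mp hBm
              rw [Finset.card_insert_of_notMem haB]
              omega
            · rintro ⟨h1, h2⟩
              have : m - 1 ∈ C.image Finset.card := by
                rw [himg]; exact Finset.mem_Icc.mpr ⟨by omega, by omega⟩
              obtain ⟨B, hB, hBc⟩ := Finset.mem_image.mp this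
              have hBM : B ≠ C.sup id := fun h => by
                rw [h, hMcard] at hBc; omega
              refine ⟨B, Finset.mem_erase.mpr ⟨hBM, hB⟩, ?_⟩
              rw [Finset.card_insert_of_notMem (haC B hB), hBc]
              omega

theorem scd_exists (n : ℕ) (hn : 1 ≤ n) :
    ∃ 𝒞 : Finset (Finset (Finset (Fin n))),
      (∀ A : Finset (Fin n), ∃! C, C ∈ 𝒞 ∧ A ∈ C) ∧
      𝒞.card = n.choose (n / 2) ∧
      ∀ C ∈ 𝒞, IsChain (· ⊆ ·) (C : Set (Finset (Fin n))) ∧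
        ∃ k, k ≤ n / 2 ∧ C.image Finset.card = Finset.Icc k (n - k) := by
  obtain ⟨𝒞, hpart, hprop⟩ := scd_aux (Finset.univ : Finset (Fin n))
  have huniv : (Finset.univ : Finset (Fin n)).card = n := by simp
  rw [huniv] at hprop
  have hpart' : ∀ A : Finset (Fin n), ∃! C, C ∈ 𝒞 ∧ A ∈ C := fun A =>
    hpart A (Finset.subset_univ A)
  refine ⟨𝒞, hpart', ?_, fun C hC => ⟨(hprop C hC).2.1, (hprop C hC).2.2⟩⟩
  -- counting
  have hpc : ((Finset.univ : Finset (Fin n)).powersetCard (n / 2)).card = n.choose (n / 2) := by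
    rw [Finset.card_powersetCard, huniv]
  rw [← hpc]
  symm
  refine Finset.card_bij (fun A _ => (hpart' A).exists.choose) ?_ ?_ ?_
  · intro A hA
    exact (hpart' A).exists.choose_spec.1
  · intro A₁ h₁ A₂ h₂ heq
    have s₁ := (hpart' A₁).exists.choose_spec
    have s₂ := (hpart' A₂).exists.choose_spec
    replace heq : (hpart' A₁).exists.choose = (hpart' A₂).exists.choose := heq
    rw [heq] at s₁
    have hchain := (hprop _ s₂.1).2.1
    have hc₁ : A₁.card = n / 2 := (Finset.mem_powersetCard.mp h₁).2
    have hc₂ : A₂.card = n / 2 := (Finset.mem_powersetCard.mp h₂).2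
    exact scd_chain_card_inj hchain s₁.2 s₂.2 (by rw [hc₁, hc₂])
  · intro C hC
    obtain ⟨-, -, k, hk, himg⟩ := hprop C hC
    have : n / 2 ∈ C.image Finset.card := by
      rw [himg]; exact Finset.mem_Icc.mpr ⟨hk, by omega⟩
    obtain ⟨A, hAC, hAcard⟩ := Finset.mem_image.mp this
    refine ⟨A, Finset.mem_powersetCard.mpr ⟨Finset.subset_univ A, hAcard⟩, ?_⟩
    exact (hpart' A).unique (hpart' A).exists.choose_spec ⟨hC, hAC⟩
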